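/- If (L,R) is a left-right pair of matrices in SL₂(ℕ₀), then the subsemigroup of SL₂(ℕ₀) generated by {L,R} is free on {L,R}: whenever T₁T₂⋯T_k = T′₁T′₂⋯T′_ℓ with k, ℓ ≥ 0 and each T_i, T′_j ∈ {L,R}, one has k = ℓ and T_i = T′_i for all i (equivalently, any two finite words in L and R whose matrix products are equal must be the same word). -/

import Mathlib

/-- The open first quadrant of "positive" complex numbers. -/
def D0 : Set ℂ := {z : ℂ | 0 < z.re ∧ 0 < z.im}

/-- A 2×2 matrix with nonnegative integer entries has determinant 1. -/
def SL2N (T : Matrix (Fin 2) (Fin 2) ℕ) : Prop :=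
  T 0 0 * T 1 1 = T 0 1 * T 1 0 + 1

/-- The Möbius action of such a matrix on a complex number. -/
noncomputable def act (T : Matrix (Fin 2) (Fin 2) ℕ) (z : ℂ) : ℂ :=
  ((T 0 0 : ℂ) * z + (T 0 1 : ℂ)) / ((T 1 0 : ℂ) * z + (T 1 1 : ℂ))

/-- Integer determinant-one condition. -/
def dZ (T : Matrix (Fin 2) (Fin 2) ℕ) : Prop :=
  (T 0 0 : ℤ) * T 1 1 - T 0 1 * T 1 0 = 1

lemma dZ_of_SL2N {T} (h : SL2N T) : dZ T := by
  unfold SL2N at h; unfold dZ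
  zify at h; linarith

lemma dZ_one : dZ 1 := by
  unfold dZ; simp

lemma dZ_mul {A B} (hA : dZ A) (hB : dZ B) : dZ (A * B) := by
  unfold dZ at *
  simp only [Matrix.mul_apply, Fin.sum_univ_two]
  push_cast
  linear_combination ((B 0 0 : ℤ) * B 1 1 - B 0 1 * B 1 0) * hA + hB

lemma dZ_prod {w : List (Matrix (Fin 2) (Fin 2) ℕ)} (hw : ∀ X ∈ w, dZ X) :
    dZ w.prod := by
  induction w with
  | nil => simpa using dZ_one
  | cons T t ih =>
    rw [List.prod_cons]
    exact dZ_mul (hw T (by simp)) (ih fun X hX => hw X (by simp [hX]))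

lemma den_ne {T} (hT : dZ T) {z : ℂ} (hz : z ∈ D0) :
    (T 1 0 : ℂ) * z + (T 1 1 : ℂ) ≠ 0 := by
  obtain ⟨hx, hy⟩ := hz
  intro h
  have him : (T 1 0 : ℝ) * z.im = 0 := by
    have := congrArg Complex.im h; simpa using this
  have h10 : T 1 0 = 0 := by
    rcases mul_eq_zero.mp him with h' | h'
    · exact_mod_cast h'
    · exact absurd h' (ne_of_gt hy)
  have hre : (T 1 0 : ℝ) * z.re + (T 1 1 : ℝ) = 0 := by
    have := congrArg Complex.re h; simpa using this
  have h11 : T 1 1 = 0 := by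
    rw [h10] at hre; push_cast at hre
    rw [zero_mul, zero_add] at hre; exact_mod_cast hre
  unfold dZ at hT
  rw [h10, h11] at hT; simp at hT

lemma act_mem {T} (hT : dZ T) {z : ℂ} (hz : z ∈ D0) : act T z ∈ D0 := by
  have hd := den_ne hT hz
  unfold dZ at hT
  obtain ⟨hx, hy⟩ := hz
  have hnsq : 0 < Complex.normSq ((T 1 0 : ℂ) * z + (T 1 1 : ℂ)) :=
    Complex.normSq_pos.mpr hd
  have hTR : (T 0 0 : ℝ) * T 1 1 - T 0 1 * T 1 0 = 1 := by exact_mod_cast hT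
  have hrow : ∀ i, 0 < (T i 0 : ℝ) * z.re + (T i 1 : ℝ) := by
    intro i
    rcases Nat.eq_zero_or_pos (T i 0) with h0 | h0
    · rcases Nat.eq_zero_or_pos (T i 1) with h1 | h1
      · exfalso
        fin_cases i <;> simp_all
      · have hb : (0:ℝ) < T i 1 := by exact_mod_cast h1
        have h0' : ((T i 0 : ℕ) : ℝ) = 0 := by rw [h0]; simp
        rw [h0', zero_mul, zero_add]; exact hb
    · have hA : (0:ℝ) < T i 0 := by exact_mod_cast h0
      have hB : (0:ℝ) ≤ T i 1 := Nat.cast_nonneg _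
      nlinarith
  constructor
  · show 0 < (act T z).re
    unfold act
    rw [Complex.div_re, ← add_div]
    apply div_pos _ hnsq
    simp only [Complex.add_re, Complex.add_im, Complex.mul_re, Complex.mul_im,
      Complex.natCast_re, Complex.natCast_im]
    have h0 := hrow 0
    have h1 := hrow 1
    nlinarith [mul_pos h0 h1, mul_nonneg (mul_nonneg (Nat.cast_nonneg (α := ℝ) (T 0 0)) (Nat.cast_nonneg (α := ℝ) (T 1 0))) (mul_pos hy hy).le]
  · show 0 < (act T z).im
    unfold act
    rw [Complex.div_im, div_sub_div_same]
    apply div_pos _ hnsq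
    simp only [Complex.add_re, Complex.add_im, Complex.mul_re, Complex.mul_im,
      Complex.natCast_re, Complex.natCast_im]
    nlinarith [hTR, hy]

lemma act_mul {A B} (hA : dZ A) (hB : dZ B) {z : ℂ} (hz : z ∈ D0) :
    act (A * B) z = act A (act B z) := by
  have hzB := act_mem hB hz
  have hdB := den_ne hB hz
  have hdA := den_ne hA hzB
  have hdAB := den_ne (dZ_mul hA hB) hz
  unfold act at *
  simp only [Matrix.mul_apply, Fin.sum_univ_two] at hdAB ⊢
  push_cast at hdAB ⊢
  rw [div_eq_div_iff hdAB hdA]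
  field_simp
  ring

lemma matMulCancel {T a b : Matrix (Fin 2) (Fin 2) ℕ} (hT : SL2N T)
    (h : T * a = T * b) : a = b := by
  have HT : (T 0 0 : ℤ) * T 1 1 - T 0 1 * T 1 0 = 1 := by
    unfold SL2N at hT; zify at hT; linarith
  have e : ∀ i j, T i 0 * a 0 j + T i 1 * a 1 j = T i 0 * b 0 j + T i 1 * b 1 j := by
    intro i j
    have := congrFun (congrFun h i) j
    simpa [Matrix.mul_apply, Fin.sum_univ_two] using this
  have hz : ∀ m n : ℕ, (m : ℤ) = n → m = n := fun m n h' => by exact_mod_cast h'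
  ext i j
  have E0 : (T 0 0 : ℤ) * a 0 j + T 0 1 * a 1 j = T 0 0 * b 0 j + T 0 1 * b 1 j := by
    exact_mod_cast e 0 j
  have E1 : (T 1 0 : ℤ) * a 0 j + T 1 1 * a 1 j = T 1 0 * b 0 j + T 1 1 * b 1 j := by
    exact_mod_cast e 1 j
  fin_cases i
  · show a 0 j = b 0 j
    exact hz _ _ (by linear_combination (T 1 1 : ℤ) * E0 - (T 0 1 : ℤ) * E1
      + ((a 1 j : ℤ) - a 0 j) * HT * 0 + ((b 0 j : ℤ) - a 0 j) * HT + HT * ((a 0 j : ℤ) - b 0 j) * 0)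
  · show a 1 j = b 1 j
    exact hz _ _ (by linear_combination (T 0 0 : ℤ) * E1 - (T 1 0 : ℤ) * E0
      + ((b 1 j : ℤ) - a 1 j) * HT)

lemma eq_one_of_mul_eq_one {T P : Matrix (Fin 2) (Fin 2) ℕ} (hT : SL2N T)
    (h : T * P = 1) : T = 1 := by
  have e : ∀ i j : Fin 2, T i 0 * P 0 j + T i 1 * P 1 j = (1 : Matrix (Fin 2) (Fin 2) ℕ) i j := by
    intro i j
    have := congrFun (congrFun h i) j
    simpa [Matrix.mul_apply, Fin.sum_univ_two] using this
  have e00 : T 0 0 * P 0 0 + T 0 1 * P 1 0 = 1 := by simpa [Matrix.one_apply] using e 0 0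
  have e01 : T 0 0 * P 0 1 + T 0 1 * P 1 1 = 0 := by simpa [Matrix.one_apply] using e 0 1
  have e10 : T 1 0 * P 0 0 + T 1 1 * P 1 0 = 0 := by simpa [Matrix.one_apply] using e 1 0
  have e11 : T 1 0 * P 0 1 + T 1 1 * P 1 1 = 1 := by simpa [Matrix.one_apply] using e 1 1
  unfold SL2N at hT
  have h00 : T 0 0 ≠ 0 := by intro h'; rw [h'] at hT; simp at hT
  have h11 : T 1 1 ≠ 0 := by intro h'; rw [h'] at hT; simp at hT
  have hP10 : P 1 0 = 0 := by
    have := Nat.eq_zero_of_add_eq_zero_left e10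
    exact (Nat.mul_eq_zero.mp this).resolve_left h11
  have hP01 : P 0 1 = 0 := by
    have := Nat.eq_zero_of_add_eq_zero_right e01
    exact (Nat.mul_eq_zero.mp this).resolve_left h00
  rw [hP10, Nat.mul_zero, Nat.add_zero] at e00
  rw [hP01, Nat.mul_zero, Nat.zero_add] at e11
  have hT00 : T 0 0 = 1 := Nat.eq_one_of_mul_eq_one_right e00
  have hP00 : P 0 0 = 1 := Nat.eq_one_of_mul_eq_one_left e00
  have hT11 : T 1 1 = 1 := Nat.eq_one_of_mul_eq_one_right e11
  have hP11 : P 1 1 = 1 := Nat.eq_one_of_mul_eq_one_left e11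
  have hT10 : T 1 0 = 0 := by
    have := Nat.eq_zero_of_add_eq_zero_right e10
    rw [hP00, Nat.mul_one] at this; exact this
  have hT01 : T 0 1 = 0 := by
    have := Nat.eq_zero_of_add_eq_zero_left e01
    rw [hP11, Nat.mul_one] at this; exact this
  ext i j
  fin_cases i <;> fin_cases j <;>
    simp [Matrix.one_apply, hT00, hT01, hT10, hT11]


/-- A pair of non-identity matrices in SL₂(ℕ₀) is a left-right pair if
`L(D₀) ∩ R(D₀) = ∅`. -/
def LeftRightPair (L R : Matrix (Fin 2) (Fin 2) ℕ) : Prop :=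
  SL2N L ∧ SL2N R ∧ L ≠ 1 ∧ R ≠ 1 ∧ ∀ z₁ ∈ D0, ∀ z₂ ∈ D0, act L z₁ ≠ act R z₂

/-- The subsemigroup generated by a left-right pair is free: two words in
`L` and `R` with equal matrix products are the same word. -/
theorem leftRightPair_free (L R : Matrix (Fin 2) (Fin 2) ℕ)
    (h : LeftRightPair L R) (w₁ w₂ : List (Matrix (Fin 2) (Fin 2) ℕ))
    (h₁ : ∀ T ∈ w₁, T = L ∨ T = R) (h₂ : ∀ T ∈ w₂, T = L ∨ T = R)
    (hprod : w₁.prod = w₂.prod) : w₁ = w₂ := by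
  obtain ⟨hL, hR, hL1, hR1, hdisj⟩ := h
  have hdL : dZ L := dZ_of_SL2N hL
  have hdR : dZ R := dZ_of_SL2N hR
  have hSL : ∀ {X}, X = L ∨ X = R → SL2N X := by
    rintro X (rfl | rfl) <;> assumption
  have hword : ∀ (w : List (Matrix (Fin 2) (Fin 2) ℕ)),
      (∀ T ∈ w, T = L ∨ T = R) → dZ w.prod := by
    intro w hw
    exact dZ_prod fun X hX => dZ_of_SL2N (hSL (hw X hX))
  induction w₁ generalizing w₂ with
  | nil =>
    cases w₂ with
    | nil => rfl
    | cons S s =>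
      exfalso
      have hps : S * s.prod = 1 := by
        rw [List.prod_cons] at hprod; simpa using hprod.symm
      have hS1 : S = 1 := eq_one_of_mul_eq_one (hSL (h₂ S (by simp))) hps
      rcases h₂ S (by simp) with h' | h' <;> rw [h'] at hS1 <;> [exact hL1 hS1; exact hR1 hS1]
  | cons T t ih =>
    cases w₂ with
    | nil =>
      exfalso
      have hps : T * t.prod = 1 := by
        rw [List.prod_cons] at hprod; simpa using hprod
      have hT1 : T = 1 := eq_one_of_mul_eq_one (hSL (h₁ T (by simp))) hps
      rcases h₁ T (by simp) with h' | h' <;> rw [h'] at hT1 <;> [exact hL1 hT1; exact hR1 hT1]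
    | cons S s =>
      rw [List.prod_cons, List.prod_cons] at hprod
      have hdt : dZ t.prod := hword t fun X hX => h₁ X (by simp [hX])
      have hds : dZ s.prod := hword s fun X hX => h₂ X (by simp [hX])
      have hz : (1 + Complex.I : ℂ) ∈ D0 := by constructor <;> simp
      have hzt : act t.prod (1 + Complex.I) ∈ D0 := act_mem hdt hz
      have hzs : act s.prod (1 + Complex.I) ∈ D0 := act_mem hds hz
      have hact : act T (act t.prod (1 + Complex.I)) = act S (act s.prod (1 + Complex.I)) := by
        rw [← act_mul (dZ_of_SL2N (hSL (h₁ T (by simp)))) hdt hz,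
            ← act_mul (dZ_of_SL2N (hSL (h₂ S (by simp)))) hds hz, hprod]
      have hTS : T = S := by
        rcases h₁ T (by simp) with hT' | hT' <;> rcases h₂ S (by simp) with hS' | hS'
        · rw [hT', hS']
        · exfalso; rw [hT', hS'] at hact
          exact hdisj _ hzt _ hzs hact
        · exfalso; rw [hT', hS'] at hact
          exact hdisj _ hzs _ hzt hact.symm
        · rw [hT', hS']
      subst hTS
      have hts : t.prod = s.prod :=
        matMulCancel (hSL (h₁ T (by simp))) hprod
      have := ih s (fun X hX => h₁ X (by simp [hX])) (fun X hX => h₂ X (by simp [hX])) hts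
      rw [this]
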